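/- Let G = (V,E) be an n-vertex graph with n ≥ 2, let Δ ≥ 1 be an upper bound on the maximum degree of G, and let 0 ≤ p ≤ 1 satisfy p ≥ max{15·ln(n)/Δ, 32·ln(n)/|E|}. Let G_p be the random subgraph of G obtained by including each edge of E independently with probability p. Then Pr[μ(G_p) ≥ |E|/(8Δ)] ≥ 1 − 2/n^4. -/

import Mathlib

open Finset

variable {V : Type*} [DecidableEq V]

/-- Degree of a vertex in an edge set. -/
def deg (E : Finset (Sym2 V)) (v : V) : ℕ := (E.filter (fun e => v ∈ e)).card

/-- Edge-degree: the sum of the degrees of the two endpoints. -/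
def edeg (E : Finset (Sym2 V)) (e : Sym2 V) : ℕ :=
  Sym2.lift ⟨fun u v => deg E u + deg E v, fun _ _ => add_comm _ _⟩ e

/-- Generalized `(β,β⁻,k)`-HEDCS of `G`: a hierarchical decomposition
`∅ = H_0 ⊆ H_1 ⊆ … ⊆ H_k = Hs` with edge-degrees in `H_i` of new edges at most `β`,
and every edge of `G` outside `Hs` has edge-degree at least `β⁻` in `Hs`. -/
def IsHEDCSgen (G Hs : Finset (Sym2 V)) (β βm k : ℕ) : Prop :=
  Hs ⊆ G ∧ ∃ H : ℕ → Finset (Sym2 V),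
    H 0 = ∅ ∧ H k = Hs ∧
    (∀ i < k, H i ⊆ H (i + 1)) ∧
    (∀ i, 1 ≤ i → i ≤ k → ∀ e ∈ H i \ H (i - 1), edeg (H i) e ≤ β) ∧
    (∀ e ∈ G \ Hs, βm ≤ edeg Hs e)

/-- `(β,k)`-HEDCS of `G`. -/
def IsHEDCS (G Hs : Finset (Sym2 V)) (β k : ℕ) : Prop :=
  IsHEDCSgen G Hs β (β - 1) k

/-- Bipartite `(β,k)`-HEDCS with vertex parts `P` and `Q`
(the base graph is `Hs` itself, so the second HEDCS condition is vacuous). -/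
def IsBipartiteHEDCS (P Q : Finset V) (Hs : Finset (Sym2 V)) (β k : ℕ) : Prop :=
  Disjoint P Q ∧
  (∀ e ∈ Hs, ∃ u v, e = s(u, v) ∧ u ∈ P ∧ v ∈ Q) ∧
  ∃ H : ℕ → Finset (Sym2 V),
    H 0 = ∅ ∧ H k = Hs ∧
    (∀ i < k, H i ⊆ H (i + 1)) ∧
    (∀ i, 1 ≤ i → i ≤ k → ∀ e ∈ H i \ H (i - 1), edeg (H i) e ≤ β)

/-- A matching: a set of pairwise vertex-disjoint (non-loop) edges. -/
def IsMatching (M : Finset (Sym2 V)) : Prop :=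
  (∀ e ∈ M, ¬ e.IsDiag) ∧
  ∀ e ∈ M, ∀ f ∈ M, e ≠ f → ∀ v : V, v ∈ e → v ∉ f

/-- The maximum matching size of the edge set `E`. -/
noncomputable def matchNum (E : Finset (Sym2 V)) : ℕ :=
  sSup {n : ℕ | ∃ M : Finset (Sym2 V), M ⊆ E ∧ IsMatching M ∧ M.card = n}

-- total weight over powerset
lemma sum_weights (F : Finset (Sym2 V)) (p : ℝ) :
    ∑ S ∈ F.powerset, p ^ S.card * (1 - p) ^ (F.card - S.card) = 1 := by
  classical
  have h := Finset.prod_add (fun _ : Sym2 V => p) (fun _ : Sym2 V => 1 - p) F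
  simp only [Finset.prod_const] at h
  have : ∀ S ∈ F.powerset, p ^ S.card * (1 - p) ^ ((F \ S).card)
      = p ^ S.card * (1 - p) ^ (F.card - S.card) := by
    intro S hS
    rw [Finset.card_sdiff_of_subset (Finset.mem_powerset.mp hS)]
  rw [Finset.sum_congr rfl this] at h
  rw [← h]
  simp

-- card of vertices of an edge
lemma card_filter_mem_le [Fintype V] (e : Sym2 V) :
    (univ.filter (fun v : V => v ∈ e)).card ≤ 2 := by
  induction e using Sym2.ind with
  | _ a b =>
    refine le_trans (Finset.card_le_card (fun v hv => ?_)) (Finset.card_insert_le a {b} |>.trans (by simp))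
    simp only [Finset.mem_filter, Sym2.mem_iff, Finset.mem_insert, Finset.mem_singleton] at hv ⊢
    tauto

lemma card_filter_mem_eq [Fintype V] (e : Sym2 V) (he : ¬ e.IsDiag) :
    (univ.filter (fun v : V => v ∈ e)).card = 2 := by
  induction e using Sym2.ind with
  | _ a b =>
    have hab : a ≠ b := by simpa using he
    have : (univ.filter (fun v : V => v ∈ s(a, b))) = {a, b} := by
      ext v; simp [Sym2.mem_iff]
    rw [this, Finset.card_insert_of_notMem (by simpa using hab), Finset.card_singleton]

-- handshake
lemma handshake [Fintype V] (E : Finset (Sym2 V)) (hE : ∀ e ∈ E, ¬ e.IsDiag) :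
    ∑ v : V, deg E v = 2 * E.card := by
  classical
  unfold deg
  simp only [Finset.card_filter]
  rw [Finset.sum_comm]
  calc ∑ e ∈ E, ∑ v : V, (if v ∈ e then 1 else 0)
      = ∑ _e ∈ E, 2 := Finset.sum_congr rfl (fun e he => by
        rw [← Finset.card_filter]; exact card_filter_mem_eq e (hE e he))
    _ = 2 * E.card := by simp [mul_comm]

-- edges meeting U
lemma card_meet_le [Fintype V] (E : Finset (Sym2 V)) (U : Finset V) :
    (E.filter (fun e => ∃ v ∈ e, v ∈ U)).card ≤ ∑ v ∈ U, deg E v := by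
  classical
  unfold deg
  simp only [Finset.card_filter]
  rw [Finset.sum_comm]
  calc ∑ e ∈ E, (if ∃ v ∈ e, v ∈ U then 1 else 0)
      ≤ ∑ e ∈ E, ∑ v ∈ U, (if v ∈ e then 1 else 0) := by
        refine Finset.sum_le_sum (fun e _ => ?_)
        split
        · next h =>
            obtain ⟨v, hv, hvU⟩ := h
            calc (1:ℕ) = ∑ v' ∈ {v}, (if v' ∈ e then 1 else 0) := by simp [Finset.filter_singleton, hv]
              _ ≤ _ := Finset.sum_le_sum_of_subset (by simpa using hvU)
        · positivity
    _ = _ := rfl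

lemma exists_maximal_matching (S : Finset (Sym2 V)) (hS : ∀ e ∈ S, ¬ e.IsDiag) :
    ∃ M, M ⊆ S ∧ IsMatching M ∧ M.card ≤ matchNum S ∧
      ∀ e ∈ S, ∃ v, v ∈ e ∧ ∃ f ∈ M, v ∈ f := by
  classical
  set 𝓜 := S.powerset.filter (fun M => IsMatching M) with h𝓜
  have hne : 𝓜.Nonempty := ⟨∅, by
    simp only [h𝓜, Finset.mem_filter, Finset.mem_powerset]
    exact ⟨Finset.empty_subset _, by simp [IsMatching]⟩⟩
  obtain ⟨M, hM𝓜, hMmax⟩ := Finset.exists_max_image 𝓜 Finset.card hne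
  rw [h𝓜, Finset.mem_filter, Finset.mem_powerset] at hM𝓜
  obtain ⟨hMS, hMm⟩ := hM𝓜
  refine ⟨M, hMS, hMm, ?_, ?_⟩
  · -- card ≤ matchNum S
    refine le_csSup ⟨S.card, ?_⟩ ⟨M, hMS, hMm, rfl⟩
    rintro k ⟨M', hM'S, _, rfl⟩
    exact Finset.card_le_card hM'S
  · intro e heS
    by_contra hcon
    push_neg at hcon
    -- hcon : ∀ v, v ∈ e → ∀ f ∈ M, v ∉ f
    have heM : e ∉ M := fun heM =>
      hcon e.out.1 (Sym2.out_fst_mem e) _ heM (Sym2.out_fst_mem e)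
    have hmatch : IsMatching (insert e M) := by
      constructor
      · intro f hf
        rcases Finset.mem_insert.mp hf with h | h
        · exact h ▸ hS e heS
        · exact hMm.1 f h
      · intro f₁ hf₁ f₂ hf₂ hne' v hv hv2
        rcases Finset.mem_insert.mp hf₁ with h₁ | h₁ <;>
          rcases Finset.mem_insert.mp hf₂ with h₂ | h₂
        · exact hne' (h₁.trans h₂.symm)
        · exact hcon v (h₁ ▸ hv) f₂ h₂ hv2
        · exact hcon v (h₂ ▸ hv2) f₁ h₁ hv
        · exact hMm.2 f₁ h₁ f₂ h₂ hne' v hv hv2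
    have hmem : insert e M ∈ 𝓜 := by
      simp only [h𝓜, Finset.mem_filter, Finset.mem_powerset]
      exact ⟨Finset.insert_subset heS hMS, hmatch⟩
    have := hMmax _ hmem
    rw [Finset.card_insert_of_notMem heM] at this
    omega

lemma sum_avoid (E F : Finset (Sym2 V)) (hF : F ⊆ E) (p : ℝ) :
    ∑ S ∈ (E \ F).powerset, p ^ S.card * (1 - p) ^ (E.card - S.card)
      = (1 - p) ^ F.card := by
  classical
  have hEF : (E \ F).card + F.card = E.card := by
    rw [Finset.card_sdiff_of_subset hF]
    exact Nat.sub_add_cancel (Finset.card_le_card hF)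
  calc ∑ S ∈ (E \ F).powerset, p ^ S.card * (1 - p) ^ (E.card - S.card)
      = ∑ S ∈ (E \ F).powerset,
          (1 - p) ^ F.card * (p ^ S.card * (1 - p) ^ ((E \ F).card - S.card)) := by
        refine Finset.sum_congr rfl (fun S hS => ?_)
        have h1 : S.card ≤ (E \ F).card :=
          Finset.card_le_card (Finset.mem_powerset.mp hS)
        have h2 : E.card - S.card = F.card + ((E \ F).card - S.card) := by omega
        rw [h2, pow_add]; ring
    _ = (1 - p) ^ F.card *
          ∑ S ∈ (E \ F).powerset, p ^ S.card * (1 - p) ^ ((E \ F).card - S.card) := by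
        rw [Finset.mul_sum]
    _ = (1 - p) ^ F.card := by rw [sum_weights]; ring

noncomputable def avoidE (E : Finset (Sym2 V)) (U : Finset V) : Finset (Sym2 V) :=
  @Finset.filter _ (fun e => ∀ v ∈ e, v ∉ U) (Classical.decPred _) E

lemma mem_avoidE {E : Finset (Sym2 V)} {U : Finset V} {e : Sym2 V} :
    e ∈ avoidE E U ↔ e ∈ E ∧ ∀ v ∈ e, v ∉ U := by
  unfold avoidE; exact @Finset.mem_filter _ _ (Classical.decPred _) _ _

lemma avoidE_subset (E : Finset (Sym2 V)) (U : Finset V) : avoidE E U ⊆ E :=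
  fun e he => (mem_avoidE.mp he).1

lemma card_avoidE [Fintype V] (E : Finset (Sym2 V)) (U : Finset V) :
    E.card ≤ (avoidE E U).card + ∑ v ∈ U, deg E v := by
  classical
  have h1 : (E \ avoidE E U) ⊆ E.filter (fun e => ∃ v ∈ e, v ∈ U) := by
    intro e he
    rw [Finset.mem_sdiff] at he
    obtain ⟨heE, hena⟩ := he
    rw [Finset.mem_filter]
    refine ⟨heE, ?_⟩
    by_contra hcon
    push_neg at hcon
    exact hena (mem_avoidE.mpr ⟨heE, hcon⟩)
  have h2 : (E \ avoidE E U).card ≤ ∑ v ∈ U, deg E v :=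
    le_trans (Finset.card_le_card h1) (card_meet_le E U)
  have h3 := Finset.card_sdiff_add_card_eq_card (avoidE_subset E U)
  omega

set_option maxHeartbeats 1000000 in
theorem random_subgraph_large_matching {V : Type*} [Fintype V] [DecidableEq V]
    (hn : 2 ≤ Fintype.card V)
    (E : Finset (Sym2 V)) (hE : ∀ e ∈ E, ¬ e.IsDiag)
    (Δ : ℕ) (hΔ1 : 1 ≤ Δ) (hΔ : ∀ v : V, deg E v ≤ Δ)
    (p : ℝ) (hp0 : 0 ≤ p) (hp1 : p ≤ 1)
    (hp : max (15 * Real.log (Fintype.card V) / (Δ : ℝ))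
              (32 * Real.log (Fintype.card V) / (E.card : ℝ)) ≤ p) :
    1 - 2 / (Fintype.card V : ℝ) ^ 4 ≤
      ∑ S ∈ E.powerset,
        (if (E.card : ℝ) / (8 * (Δ : ℝ)) ≤ (matchNum S : ℝ)
          then p ^ S.card * (1 - p) ^ (E.card - S.card) else 0) := by
  classical
  have hn1 : (1:ℝ) ≤ (Fintype.card V : ℝ) := by
    have : (1:ℕ) ≤ Fintype.card V := by omega
    exact_mod_cast this
  have hnR : (0:ℝ) < (Fintype.card V : ℝ) := by linarith
  have hL : (0:ℝ) ≤ Real.log (Fintype.card V) := Real.log_nonneg hn1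
  have h1p : (0:ℝ) ≤ 1 - p := by linarith
  have hwnn : ∀ S : Finset (Sym2 V), 0 ≤ p ^ S.card * (1 - p) ^ (E.card - S.card) :=
    fun S => mul_nonneg (pow_nonneg hp0 _) (pow_nonneg h1p _)
  rw [← Finset.sum_filter]
  have htot := sum_weights E p
  have hsplit := Finset.sum_filter_add_sum_filter_not E.powerset
    (fun S => (E.card : ℝ) / (8 * (Δ:ℝ)) ≤ (matchNum S : ℝ))
    (fun S => p ^ S.card * (1 - p) ^ (E.card - S.card))
  have h2n : (0:ℝ) < 2 / (Fintype.card V : ℝ)^4 := by positivity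
  suffices hbad : ∑ S ∈ E.powerset.filter
      (fun S => ¬ ((E.card : ℝ) / (8 * (Δ:ℝ)) ≤ (matchNum S : ℝ))),
      (p ^ S.card * (1 - p) ^ (E.card - S.card)) ≤ 2 / (Fintype.card V : ℝ)^4 by
    linarith
  by_cases hm0 : E.card = 0
  · have hfe : E.powerset.filter
        (fun S => ¬ ((E.card : ℝ) / (8 * (Δ:ℝ)) ≤ (matchNum S : ℝ))) = ∅ := by
      refine Finset.filter_false_of_mem (fun S hS => ?_)
      rw [not_not, hm0]
      simp [div_nonneg]
    rw [hfe]
    simpa using h2n.le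
  -- main case
  have hmpos : 0 < E.card := Nat.pos_of_ne_zero hm0
  have hΔR : (1:ℝ) ≤ (Δ:ℝ) := by exact_mod_cast hΔ1
  have hΔ0 : (0:ℝ) < (Δ:ℝ) := by linarith
  have hmR : (0:ℝ) < (E.card:ℝ) := by exact_mod_cast hmpos
  set t := E.card / (4*Δ) with ht
  have htm : t * (4*Δ) ≤ E.card := Nat.div_mul_le_self _ _
  have h2m : 2 * E.card ≤ Fintype.card V * Δ := by
    rw [← handshake E hE]
    calc ∑ v : V, deg E v ≤ ∑ _v : V, Δ := Finset.sum_le_sum (fun v _ => hΔ v)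
      _ = Fintype.card V * Δ := by simp [mul_comm]
  have htn : t ≤ Fintype.card V := by
    have h8 : (8 * t) * Δ ≤ Fintype.card V * Δ := by
      calc (8*t)*Δ = 2*(t*(4*Δ)) := by ring
        _ ≤ 2*E.card := by omega
        _ ≤ _ := h2m
    have := Nat.le_of_mul_le_mul_right h8 (by omega : 0 < Δ)
    omega
  -- coverage
  have hcover : ∀ S ∈ E.powerset.filter
      (fun S => ¬ ((E.card : ℝ) / (8 * (Δ:ℝ)) ≤ (matchNum S : ℝ))),
      ∃ U ∈ Finset.powersetCard t (univ : Finset V), S ∈ (E \ avoidE E U).powerset := by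
    intro S hS
    rw [Finset.mem_filter, Finset.mem_powerset] at hS
    obtain ⟨hSE, hSbad⟩ := hS
    push_neg at hSbad
    obtain ⟨M, hMS, hMm, hMcard, hMcov⟩ :=
      exists_maximal_matching S (fun e he => hE e (hSE he))
    have hMt : 2 * M.card ≤ t := by
      have hlt : ((2 * M.card * (4*Δ) : ℕ) : ℝ) < (E.card : ℝ) := by
        push_cast
        have : (M.card : ℝ) ≤ (matchNum S : ℝ) := by exact_mod_cast hMcard
        have h' : (M.card : ℝ) < (E.card : ℝ) / (8 * Δ) := lt_of_le_of_lt this hSbad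
        rw [lt_div_iff₀ (by positivity)] at h'
        nlinarith
      have hlt' : 2 * M.card * (4*Δ) < E.card := by exact_mod_cast hlt
      rw [ht, Nat.le_div_iff_mul_le (by omega : 0 < 4*Δ)]
      omega
    set U₀ := M.biUnion (fun f => univ.filter (fun v => v ∈ f)) with hU₀
    have hU₀card : U₀.card ≤ t := by
      calc U₀.card ≤ ∑ f ∈ M, (univ.filter (fun v => v ∈ f)).card :=
            Finset.card_biUnion_le
        _ ≤ ∑ _f ∈ M, 2 := Finset.sum_le_sum (fun f _ => card_filter_mem_le f)
        _ = 2 * M.card := by simp [mul_comm]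
        _ ≤ t := hMt
    obtain ⟨U, hU₀U, hUuniv, hUcard⟩ :=
      Finset.exists_subsuperset_card_eq (Finset.subset_univ U₀) hU₀card
        (by simpa using htn)
    refine ⟨U, Finset.mem_powersetCard.mpr ⟨hUuniv, hUcard⟩, ?_⟩
    rw [Finset.mem_powerset]
    intro e heS
    rw [Finset.mem_sdiff]
    refine ⟨hSE heS, ?_⟩
    intro hea
    obtain ⟨v, hve, f, hfM, hvf⟩ := hMcov e heS
    have hvU₀ : v ∈ U₀ := Finset.mem_biUnion.mpr ⟨f, hfM, by simp [hvf]⟩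
    exact (mem_avoidE.mp hea).2 v hve (hU₀U hvU₀)
  -- union bound
  have hstep1 : ∑ S ∈ E.powerset.filter
      (fun S => ¬ ((E.card : ℝ) / (8 * (Δ:ℝ)) ≤ (matchNum S : ℝ))),
      (p ^ S.card * (1 - p) ^ (E.card - S.card)) ≤
      ∑ U ∈ Finset.powersetCard t (univ : Finset V),
        ∑ S ∈ (E \ avoidE E U).powerset,
          (p ^ S.card * (1 - p) ^ (E.card - S.card)) := by
    calc ∑ S ∈ E.powerset.filter
          (fun S => ¬ ((E.card : ℝ) / (8 * (Δ:ℝ)) ≤ (matchNum S : ℝ))),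
          (p ^ S.card * (1 - p) ^ (E.card - S.card))
        ≤ ∑ S ∈ E.powerset.filter
            (fun S => ¬ ((E.card : ℝ) / (8 * (Δ:ℝ)) ≤ (matchNum S : ℝ))),
            ∑ U ∈ Finset.powersetCard t (univ : Finset V),
              (if S ∈ (E \ avoidE E U).powerset
                then p ^ S.card * (1 - p) ^ (E.card - S.card) else 0) := by
          refine Finset.sum_le_sum (fun S hS => ?_)
          obtain ⟨U, hU, hSU⟩ := hcover S hS
          have hsingle := Finset.single_le_sum
            (f := fun U => if S ∈ (E \ avoidE E U).powerset
              then p ^ S.card * (1 - p) ^ (E.card - S.card) else 0)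
            (fun U _ => by split
                           · exact hwnn S
                           · exact le_rfl) hU
          simpa [hSU] using hsingle
      _ = ∑ U ∈ Finset.powersetCard t (univ : Finset V),
            ∑ S ∈ E.powerset.filter
              (fun S => ¬ ((E.card : ℝ) / (8 * (Δ:ℝ)) ≤ (matchNum S : ℝ))),
              (if S ∈ (E \ avoidE E U).powerset
                then p ^ S.card * (1 - p) ^ (E.card - S.card) else 0) :=
          Finset.sum_comm
      _ ≤ _ := by
          refine Finset.sum_le_sum (fun U _ => ?_)
          rw [← Finset.sum_filter]
          refine Finset.sum_le_sum_of_subset_of_nonneg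
            (fun S hS => (Finset.mem_filter.mp hS).2) (fun S _ _ => hwnn S)
  -- per-U bound
  have hFcard : ∀ U ∈ Finset.powersetCard t (univ : Finset V),
      (3/4:ℝ) * E.card ≤ ((avoidE E U).card : ℝ) := by
    intro U hU
    have hUc : U.card = t := (Finset.mem_powersetCard.mp hU).2
    have h1 : ∑ v ∈ U, deg E v ≤ t * Δ := by
      calc ∑ v ∈ U, deg E v ≤ ∑ _v ∈ U, Δ := Finset.sum_le_sum (fun v _ => hΔ v)
        _ = t * Δ := by simp [hUc, mul_comm]
    have h2 := card_avoidE E U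
    have h3 : E.card ≤ (avoidE E U).card + t * Δ := by omega
    have h4 : (4 * (t * Δ) : ℝ) ≤ (E.card : ℝ) := by
      have : 4 * (t * Δ) ≤ E.card := by
        calc 4*(t*Δ) = t*(4*Δ) := by ring
          _ ≤ E.card := htm
      exact_mod_cast this
    have h5 : ((E.card : ℝ)) ≤ ((avoidE E U).card : ℝ) + (t*Δ : ℕ) := by
      exact_mod_cast h3
    push_cast at h4 h5 ⊢
    linarith
  have hterm : ∀ U ∈ Finset.powersetCard t (univ : Finset V),
      ∑ S ∈ (E \ avoidE E U).powerset,
          (p ^ S.card * (1 - p) ^ (E.card - S.card)) ≤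
        Real.exp (-((3/4) * (p * E.card))) := by
    intro U hU
    rw [sum_avoid E (avoidE E U) (avoidE_subset E U) p]
    have hk := hFcard U hU
    calc (1-p) ^ (avoidE E U).card ≤ Real.exp (-p) ^ (avoidE E U).card := by
          refine pow_le_pow_left₀ h1p ?_ _
          have := Real.add_one_le_exp (-p)
          linarith
      _ = Real.exp (((avoidE E U).card : ℝ) * (-p)) := by
          rw [Real.exp_nat_mul]
      _ ≤ Real.exp (-((3/4) * (p * E.card))) := by
          rw [Real.exp_le_exp]
          nlinarith
  -- count and finish
  have hpm : 32 * Real.log (Fintype.card V) ≤ p * E.card := by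
    have h := le_trans (le_max_right _ _) hp
    rw [div_le_iff₀ hmR] at h
    linarith
  have hpΔ : 15 * Real.log (Fintype.card V) ≤ p * Δ := by
    have h := le_trans (le_max_left _ _) hp
    rw [div_le_iff₀ hΔ0] at h
    linarith
  have htR : (t:ℝ) * (4*(Δ:ℝ)) ≤ (E.card:ℝ) := by exact_mod_cast htm
  have hkey : (t:ℝ) * Real.log (Fintype.card V) * 8 ≤ 3 * (p * E.card) := by
    have hkeyΔ : ((t:ℝ) * Real.log (Fintype.card V) * 8) * Δ
        ≤ (3 * (p * E.card)) * Δ := by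
      have a := mul_le_mul_of_nonneg_right htR hL
      have b := mul_le_mul_of_nonneg_left hpΔ hmR.le
      nlinarith [mul_nonneg hmR.le hL]
    exact le_of_mul_le_mul_right hkeyΔ hΔ0
  have hexpo : (t:ℝ) * Real.log (Fintype.card V) - (3/4) * (p * E.card)
      ≤ -(12 * Real.log (Fintype.card V)) := by linarith
  have hcount : ((Finset.powersetCard t (univ : Finset V)).card : ℝ)
      ≤ (Fintype.card V : ℝ) ^ t := by
    rw [Finset.card_powersetCard, Finset.card_univ]
    exact_mod_cast Nat.choose_le_pow (Fintype.card V) t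
  calc ∑ S ∈ E.powerset.filter
        (fun S => ¬ ((E.card : ℝ) / (8 * (Δ:ℝ)) ≤ (matchNum S : ℝ))),
        (p ^ S.card * (1 - p) ^ (E.card - S.card))
      ≤ ∑ U ∈ Finset.powersetCard t (univ : Finset V),
          ∑ S ∈ (E \ avoidE E U).powerset,
            (p ^ S.card * (1 - p) ^ (E.card - S.card)) := hstep1
    _ ≤ ∑ _U ∈ Finset.powersetCard t (univ : Finset V),
          Real.exp (-((3/4) * (p * E.card))) := Finset.sum_le_sum hterm
    _ = ((Finset.powersetCard t (univ : Finset V)).card : ℝ)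
          * Real.exp (-((3/4) * (p * E.card))) := by
        rw [Finset.sum_const, nsmul_eq_mul]
    _ ≤ (Fintype.card V : ℝ) ^ t * Real.exp (-((3/4) * (p * E.card))) :=
        mul_le_mul_of_nonneg_right hcount (Real.exp_nonneg _)
    _ = Real.exp ((t:ℝ) * Real.log (Fintype.card V) - (3/4) * (p * E.card)) := by
        have hnt : (Fintype.card V : ℝ) ^ t
            = Real.exp ((t:ℝ) * Real.log (Fintype.card V)) := by
          rw [Real.exp_nat_mul, Real.exp_log hnR]
        rw [hnt, ← Real.exp_add]
        ring_nf
    _ ≤ Real.exp (-(12 * Real.log (Fintype.card V))) := Real.exp_le_exp.mpr hexpo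
    _ ≤ 2 / (Fintype.card V : ℝ)^4 := by
        have hexp12 : Real.exp (12 * Real.log (Fintype.card V))
            = (Fintype.card V : ℝ) ^ (12:ℕ) := by
          rw [show (12:ℝ) * Real.log (Fintype.card V)
              = ((12:ℕ):ℝ) * Real.log (Fintype.card V) by norm_num,
            Real.exp_nat_mul, Real.exp_log hnR]
        rw [Real.exp_neg, hexp12, inv_eq_one_div,
          div_le_div_iff₀ (by positivity) (by positivity)]
        have h412 : (Fintype.card V:ℝ)^(4:ℕ) ≤ (Fintype.card V:ℝ)^(12:ℕ) :=
          pow_le_pow_right₀ hn1 (by norm_num)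
        nlinarith [pow_pos hnR 12]
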